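/- Let E be a separable complex Hilbert space. Suppose H_n : 𝕋^d → B(E) is a sequence of strongly measurable families with ‖H_n(x)‖ ≤ C for almost every x and all n, and suppose 𝓗 is a bounded operator on L²(𝕋^d; E) such that for every f ∈ L²(𝕋^d; E), ∫_{𝕋^d} ‖H_n(x)(f(x)) − (𝓗f)(x)‖² dx → 0 as n → ∞ (i.e., the induced decomposable operators converge strongly to 𝓗). Then 𝓗 is decomposable: there exists a strongly measurable family H : 𝕋^d → B(E) with ‖H(x)‖ ≤ C almost everywhere such that (𝓗f)(x) = H(x)(f(x)) for almost every x, for every f; moreover there exist a subsequence n_k and a full-measure subset 𝕋₀ ⊂ 𝕋^d such that H_{n_k}(x)v → H(x)v for every x ∈ 𝕋₀ and every v ∈ E. -/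

import Mathlib

open MeasureTheory Filter Topology ENNReal

/-- Auxiliary: a uniformly bounded sequence of continuous linear maps converging pointwise
on a dense range converges pointwise everywhere to a continuous linear map of norm `≤ C`. -/
lemma aux_clm_limit {E : Type*} [NormedAddCommGroup E] [NormedSpace ℂ E] [CompleteSpace E]
    (T : ℕ → E →L[ℂ] E) (C : ℝ) (hC0 : 0 ≤ C)
    {v : ℕ → E} (hv : DenseRange v)
    (hC : ∀ k i, ‖T k (v i)‖ ≤ C * ‖v i‖)
    (hconv : ∀ i, ∃ L, Tendsto (fun k => T k (v i)) atTop (𝓝 L)) :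
    ∃ S : E →L[ℂ] E, ‖S‖ ≤ C ∧ ∀ w, Tendsto (fun k => T k w) atTop (𝓝 (S w)) := by
  haveI : Nonempty E := ⟨0⟩
  have hCb : ∀ k w, ‖T k w‖ ≤ C * ‖w‖ := by
    intro k w
    have hcl : IsClosed {w : E | ‖T k w‖ ≤ C * ‖w‖} :=
      isClosed_le ((T k).continuous.norm) (continuous_const.mul continuous_norm)
    have hsub : Set.range v ⊆ {w : E | ‖T k w‖ ≤ C * ‖w‖} := by
      rintro _ ⟨i, rfl⟩; exact hC k i
    have := hcl.closure_subset_iff.mpr hsub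
    rw [hv.closure_range] at this
    exact this (Set.mem_univ w)
  have hcauchy : ∀ w : E, CauchySeq fun k => T k w := by
    intro w
    rw [Metric.cauchySeq_iff]
    intro ε hε
    have hC1 : (0:ℝ) < C + 1 := by linarith
    obtain ⟨i, hi⟩ := hv.exists_dist_lt w (show (0:ℝ) < ε / (4 * (C + 1)) by positivity)
    obtain ⟨L, hL⟩ := hconv i
    obtain ⟨N, hN⟩ := Metric.cauchySeq_iff.mp hL.cauchySeq (ε / 2) (by positivity)
    refine ⟨N, fun m hm n hn => ?_⟩
    have hend : ∀ j, dist (T j w) (T j (v i)) < ε / 4 := by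
      intro j
      calc dist (T j w) (T j (v i)) ≤ C * dist w (v i) := by
            rw [dist_eq_norm, dist_eq_norm, ← map_sub]; exact hCb j _
        _ ≤ (C + 1) * dist w (v i) :=
            mul_le_mul_of_nonneg_right (by linarith) dist_nonneg
        _ < (C + 1) * (ε / (4 * (C + 1))) := mul_lt_mul_of_pos_left hi hC1
        _ = ε / 4 := by field_simp
    have h1 := hend m
    have h2 := hend n
    have h3 := hN m hm n hn
    have h4 : dist (T n (v i)) (T n w) < ε / 4 := by rwa [dist_comm]
    calc dist (T m w) (T n w)
        ≤ dist (T m w) (T m (v i)) + dist (T m (v i)) (T n (v i))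
            + dist (T n (v i)) (T n w) := dist_triangle4 _ _ _ _
      _ < ε / 4 + ε / 2 + ε / 4 := by linarith
      _ = ε := by ring
  set S₀ : E → E := fun w => limUnder atTop (fun k => T k w) with hS₀
  have htend : ∀ w : E, Tendsto (fun k => T k w) atTop (𝓝 (S₀ w)) := by
    intro w
    obtain ⟨L, hL⟩ := cauchySeq_tendsto_of_complete (hcauchy w)
    have : S₀ w = L := by rw [hS₀]; exact hL.limUnder_eq
    rw [this]; exact hL
  have hadd : ∀ a b, S₀ (a + b) = S₀ a + S₀ b := by
    intro a b
    have h1 := htend (a + b)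
    simp only [map_add] at h1
    exact tendsto_nhds_unique h1 ((htend a).add (htend b))
  have hsmul : ∀ (c : ℂ) a, S₀ (c • a) = c • S₀ a := by
    intro c a
    have h1 := htend (c • a)
    simp only [ContinuousLinearMap.map_smul] at h1
    exact tendsto_nhds_unique h1 ((htend a).const_smul c)
  have hbd : ∀ w, ‖S₀ w‖ ≤ C * ‖w‖ := fun w =>
    le_of_tendsto (htend w).norm (Filter.Eventually.of_forall fun k => hCb k w)
  refine ⟨LinearMap.mkContinuous ⟨⟨S₀, hadd⟩, hsmul⟩ C hbd,
    LinearMap.mkContinuous_norm_le _ hC0 _, htend⟩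

/-- Auxiliary: applying a strongly measurable family of operators to a strongly
measurable function yields a strongly measurable function. -/
lemma aux_apply_sm {X : Type*} [MeasurableSpace X] {E : Type*} [NormedAddCommGroup E]
    [NormedSpace ℂ E] (T : X → E →L[ℂ] E)
    (hT : ∀ v : E, StronglyMeasurable fun x => T x v) {g : X → E}
    (hg : StronglyMeasurable g) : StronglyMeasurable fun x => T x (g x) := by
  have hsimple : ∀ s : SimpleFunc X E, StronglyMeasurable fun x => T x (s x) := by
    intro s
    induction s using SimpleFunc.induction with
    | @const c s hs =>
      have : (fun x => T x ((SimpleFunc.piecewise s hs (SimpleFunc.const X c)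
          (SimpleFunc.const X 0)) x)) = s.indicator (fun x => T x c) := by
        funext x
        by_cases hx : x ∈ s <;>
          simp [SimpleFunc.piecewise_apply, Set.indicator, hx]
      rw [this]
      exact (hT c).indicator hs
    | @add f₁ f₂ hdis h1 h2 =>
      have : (fun x => T x ((f₁ + f₂) x)) = fun x => T x (f₁ x) + T x (f₂ x) := by
        funext x; simp [map_add]
      rw [this]; exact h1.add h2
  exact stronglyMeasurable_of_tendsto atTop (fun m => hsimple (hg.approx m))
    (tendsto_pi_nhds.2 fun x => ((T x).continuous.tendsto (g x)).comp (hg.tendsto_approx x))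

/-- Auxiliary: if the `L²` norms of a sequence decay geometrically, the sequence tends to `0`
almost everywhere. -/
lemma aux_ae_tendsto {X : Type*} [MeasurableSpace X] {μ : Measure X} {E : Type*}
    [NormedAddCommGroup E] (w : ℕ → X → E)
    (hmeas : ∀ j, AEStronglyMeasurable (w j) μ)
    (hint : ∀ j, Integrable (fun x => ‖w j x‖ ^ 2) μ)
    (h : ∀ j, ∫ x, ‖w j x‖ ^ 2 ∂μ ≤ (1/2 : ℝ) ^ j) :
    ∀ᵐ x ∂μ, Tendsto (fun j => w j x) atTop (𝓝 0) := by
  set G : ℕ → X → ℝ≥0∞ := fun j x => (‖w j x‖₊ : ℝ≥0∞) ^ 2 with hG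
  have hGmeas : ∀ j, AEMeasurable (G j) μ := fun j =>
    ((hmeas j).enorm).pow_const 2
  have hGle : ∀ j, ∫⁻ x, G j x ∂μ ≤ ENNReal.ofReal ((1/2 : ℝ) ^ j) := by
    intro j
    have h1 : ENNReal.ofReal (∫ x, ‖w j x‖ ^ 2 ∂μ) = ∫⁻ x, ENNReal.ofReal (‖w j x‖ ^ 2) ∂μ :=
      ofReal_integral_eq_lintegral_ofReal (hint j)
        (Filter.Eventually.of_forall fun x => by positivity)
    have h2 : ∀ x, ENNReal.ofReal (‖w j x‖ ^ 2) = G j x := by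
      intro x
      rw [hG]
      rw [ENNReal.ofReal_pow (norm_nonneg _), ofReal_norm, enorm_eq_nnnorm]
    calc ∫⁻ x, G j x ∂μ = ENNReal.ofReal (∫ x, ‖w j x‖ ^ 2 ∂μ) := by
          rw [h1]; exact lintegral_congr fun x => (h2 x).symm
      _ ≤ ENNReal.ofReal ((1/2 : ℝ) ^ j) := ENNReal.ofReal_le_ofReal (h j)
  have hsum : ∫⁻ x, ∑' j, G j x ∂μ ≠ ⊤ := by
    rw [lintegral_tsum hGmeas]
    have : ∑' j, ∫⁻ x, G j x ∂μ ≤ ∑' j, (ENNReal.ofReal (1/2 : ℝ)) ^ j := by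
      refine ENNReal.tsum_le_tsum fun j => (hGle j).trans_eq ?_
      rw [← ENNReal.ofReal_pow (by norm_num)]
    refine ne_top_of_le_ne_top ?_ this
    rw [ENNReal.tsum_geometric]
    refine ENNReal.inv_ne_top.mpr ?_
    have hlt : ENNReal.ofReal (1/2 : ℝ) < 1 := by
      rw [ENNReal.ofReal_lt_one]; norm_num
    rw [Ne, tsub_eq_zero_iff_le]
    exact not_le.mpr hlt
  have hae : ∀ᵐ x ∂μ, ∑' j, G j x ≠ ⊤ := by
    filter_upwards [ae_lt_top' (AEMeasurable.ennreal_tsum hGmeas) hsum] with x hx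
    exact hx.ne
  filter_upwards [hae] with x hx
  have hG0 : Tendsto (fun j => G j x) atTop (𝓝 0) :=
    ENNReal.tendsto_atTop_zero_of_tsum_ne_top hx
  have hreal : Tendsto (fun j => (G j x).toReal) atTop (𝓝 0) := by
    have := (ENNReal.tendsto_toReal (show (0:ℝ≥0∞) ≠ ⊤ by simp)).comp hG0
    simpa [Function.comp_def] using this
  have hsq : Tendsto (fun j => ‖w j x‖ ^ 2) atTop (𝓝 0) := by
    have heq : ∀ j, (G j x).toReal = ‖w j x‖ ^ 2 := fun j => by
      simp [hG, ENNReal.toReal_pow]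
    simpa [heq] using hreal
  have hnorm : Tendsto (fun j => ‖w j x‖) atTop (𝓝 0) := by
    have h1 : Tendsto (fun j => Real.sqrt (‖w j x‖ ^ 2)) atTop (𝓝 (Real.sqrt 0)) :=
      (Real.continuous_sqrt.tendsto 0).comp hsq
    simpa [Real.sqrt_sq (norm_nonneg _)] using h1
  exact tendsto_zero_iff_norm_tendsto_zero.mpr hnorm

/-- If the decomposable operators induced by a uniformly bounded sequence
of strongly measurable operator families `Hₙ : 𝕋^d → B(E)` converge strongly on
`L²(𝕋^d; E)` to a bounded operator `𝓗`, then `𝓗` is decomposable, with fibers bounded by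
the same constant, and some subsequence of the fibers `H_{n_k}(x)` converges strongly to
the fiber `H(x)` for every `x` in a full-measure set `𝕋₀`. -/
theorem strong_limit_of_decomposable_is_decomposable
    {E : Type*} [NormedAddCommGroup E] [InnerProductSpace ℂ E] [CompleteSpace E]
    [TopologicalSpace.SeparableSpace E]
    {d : ℕ} (Hn : ℕ → (Fin d → AddCircle (1:ℝ)) → (E →L[ℂ] E)) (C : ℝ)
    (hmeasn : ∀ (n : ℕ) (v : E), StronglyMeasurable fun x => Hn n x v)
    (hbound : ∀ n : ℕ,
      ∀ᵐ x ∂(volume : Measure (Fin d → AddCircle (1:ℝ))), ‖Hn n x‖ ≤ C)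
    (𝓗 : Lp E 2 (volume : Measure (Fin d → AddCircle (1:ℝ))) →L[ℂ]
      Lp E 2 (volume : Measure (Fin d → AddCircle (1:ℝ))))
    (hconv : ∀ f : Lp E 2 (volume : Measure (Fin d → AddCircle (1:ℝ))),
      Tendsto (fun n => ∫ x, ‖Hn n x (f x) - (𝓗 f) x‖ ^ 2 ∂volume) atTop (nhds 0)) :
    ∃ H : (Fin d → AddCircle (1:ℝ)) → (E →L[ℂ] E),
      (∀ v : E, StronglyMeasurable fun x => H x v) ∧
      (∀ᵐ x ∂(volume : Measure (Fin d → AddCircle (1:ℝ))), ‖H x‖ ≤ C) ∧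
      (∀ f : Lp E 2 (volume : Measure (Fin d → AddCircle (1:ℝ))),
        ∀ᵐ x ∂(volume : Measure (Fin d → AddCircle (1:ℝ))), (𝓗 f) x = H x (f x)) ∧
      ∃ nk : ℕ → ℕ, StrictMono nk ∧
        ∃ 𝕋₀ : Set (Fin d → AddCircle (1:ℝ)), volume 𝕋₀ᶜ = 0 ∧
          ∀ x ∈ 𝕋₀, ∀ v : E,
            Tendsto (fun k => Hn (nk k) x v) atTop (nhds (H x v)) := by
  classical
  borelize E
  haveI : Nonempty E := ⟨0⟩
  haveI : SecondCountableTopology E := UniformSpace.secondCountable_of_separable E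
  -- the measure is a probability measure, in particular nonzero
  have hμuniv : (volume : Measure (Fin d → AddCircle (1:ℝ))) Set.univ = 1 := by
    rw [show (volume : Measure (Fin d → AddCircle (1:ℝ)))
      = Measure.pi (fun _ => volume) from rfl]
    simp [Measure.pi_univ]
  haveI : NeBot (ae (volume : Measure (Fin d → AddCircle (1:ℝ)))) := by
    rw [ae_neBot]
    intro h
    rw [h] at hμuniv
    simpa using hμuniv
  -- `C` is nonnegative
  have hC0 : (0:ℝ) ≤ C := by
    obtain ⟨x₀, hx₀⟩ := (hbound 0).exists
    exact le_trans (norm_nonneg _) hx₀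
  -- dense sequence in `E`
  set v : ℕ → E := TopologicalSpace.denseSeq E with hvdef
  have hv : DenseRange v := TopologicalSpace.denseRange_denseSeq E
  -- the constant functions as elements of `L²`
  set f : ℕ → Lp E 2 (volume : Measure (Fin d → AddCircle (1:ℝ))) :=
    fun i => (memLp_const (μ := (volume : Measure (Fin d → AddCircle (1:ℝ))))
      (p := 2) (v i)).toLp _ with hfdef
  have hfi : ∀ i, (f i : (Fin d → AddCircle (1:ℝ)) → E) =ᵐ[volume] fun _ => v i := fun i =>
    MemLp.coeFn_toLp _
  -- strong measurability of the differences
  have hdiffm : ∀ (n : ℕ) (u : Lp E 2 (volume : Measure (Fin d → AddCircle (1:ℝ)))),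
      AEStronglyMeasurable (fun x => Hn n x (u x) - (𝓗 u) x) volume := by
    intro n u
    have h1 : AEStronglyMeasurable (fun x => Hn n x (u x)) volume := by
      obtain ⟨g, hg, hug⟩ := (Lp.aestronglyMeasurable u)
      exact ⟨fun x => Hn n x (g x), aux_apply_sm _ (hmeasn n) hg,
        hug.mono fun x hx => by dsimp only; rw [hx]⟩
    exact h1.sub (Lp.aestronglyMeasurable (𝓗 u))
  -- integrability of the squared differences
  have hIntAux : ∀ (n : ℕ) (u : Lp E 2 (volume : Measure (Fin d → AddCircle (1:ℝ)))),
      Integrable (fun x => ‖Hn n x (u x) - (𝓗 u) x‖ ^ 2) volume := by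
    intro n u
    have hnormsq : ∀ (g : Lp E 2 (volume : Measure (Fin d → AddCircle (1:ℝ)))),
        Integrable (fun x => ‖g x‖ ^ 2) volume := by
      intro g
      have := (Lp.memLp g).integrable_norm_rpow two_ne_zero ENNReal.ofNat_ne_top
      have heq : (fun x => ‖g x‖ ^ (2:ℝ≥0∞).toReal)
          = fun x => ‖g x‖ ^ 2 := by
        funext x
        rw [ENNReal.toReal_ofNat, Real.rpow_two]
      rwa [heq] at this
    refine Integrable.mono' (((hnormsq u).const_mul (2 * C ^ 2)).add
      ((hnormsq (𝓗 u)).const_mul 2)) ((hdiffm n u).norm.pow 2) ?_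
    filter_upwards [hbound n] with x hx
    have h1 : ‖Hn n x (u x)‖ ≤ C * ‖u x‖ :=
      le_trans ((Hn n x).le_opNorm _) (mul_le_mul_of_nonneg_right hx (norm_nonneg _))
    have h2 : ‖Hn n x (u x) - (𝓗 u) x‖ ≤ C * ‖u x‖ + ‖(𝓗 u) x‖ :=
      le_trans (norm_sub_le _ _) (by linarith)
    have h3 : (0:ℝ) ≤ ‖Hn n x (u x) - (𝓗 u) x‖ := norm_nonneg _
    have h4 : ‖Hn n x (u x) - (𝓗 u) x‖ ^ 2 ≤ (C * ‖u x‖ + ‖(𝓗 u) x‖) ^ 2 :=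
      pow_le_pow_left₀ h3 h2 2
    simp only [Pi.add_apply]
    rw [Real.norm_eq_abs, abs_of_nonneg (by positivity)]
    nlinarith [sq_nonneg (C * ‖u x‖ - ‖(𝓗 u) x‖)]
  -- extraction of a diagonal subsequence
  have hP : ∀ k, ∀ᶠ n in atTop, ∀ i ∈ Set.Iic k,
      ∫ x, ‖Hn n x ((f i) x) - (𝓗 (f i)) x‖ ^ 2 ∂volume ≤ (1/2 : ℝ) ^ k := by
    intro k
    rw [eventually_all_finite (Set.finite_Iic k)]
    intro i _
    exact ((hconv (f i)).eventually_lt_const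
      (show (0:ℝ) < (1/2:ℝ)^k by positivity)).mono fun n hn => hn.le
  obtain ⟨nk, hnk_mono, hnk⟩ := extraction_forall_of_eventually hP
  -- a.e. convergence of `Hn (nk k) x (v i)`
  have hconv_vi : ∀ i, ∀ᵐ x ∂(volume : Measure (Fin d → AddCircle (1:ℝ))),
      Tendsto (fun k => Hn (nk k) x (v i)) atTop (𝓝 ((𝓗 (f i)) x)) := by
    intro i
    have key := aux_ae_tendsto (μ := (volume : Measure (Fin d → AddCircle (1:ℝ))))
      (w := fun j x => Hn (nk (j + i)) x ((f i) x) - (𝓗 (f i)) x)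
      (fun j => hdiffm (nk (j + i)) (f i)) (fun j => hIntAux (nk (j + i)) (f i)) ?_
    · filter_upwards [key, hfi i] with x hx hfx
      have h1 : Tendsto (fun j => Hn (nk (j + i)) x ((f i) x)) atTop
          (𝓝 ((𝓗 (f i)) x)) := tendsto_sub_nhds_zero_iff.mp hx
      have h2 : Tendsto (fun k => Hn (nk k) x ((f i) x)) atTop
          (𝓝 ((𝓗 (f i)) x)) := (tendsto_add_atTop_iff_nat i).mp h1
      rwa [hfx] at h2
    · intro j
      calc ∫ x, ‖Hn (nk (j + i)) x ((f i) x) - (𝓗 (f i)) x‖ ^ 2 ∂volume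
          ≤ (1/2 : ℝ) ^ (j + i) := hnk (j + i) i (by simp)
        _ ≤ (1/2 : ℝ) ^ j :=
            pow_le_pow_of_le_one (by norm_num) (by norm_num) (Nat.le_add_right j i)
  -- the good set
  set A : Set (Fin d → AddCircle (1:ℝ)) :=
    ⋂ (n) (i), {x | ‖Hn n x (v i)‖ ≤ C * ‖v i‖} with hA
  set B : Set (Fin d → AddCircle (1:ℝ)) := ⋂ i,
    {x | ∃ L, Tendsto (fun k => Hn (nk k) x (v i)) atTop (𝓝 L)} with hB
  set T0 : Set (Fin d → AddCircle (1:ℝ)) := A ∩ B with hT0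
  have hT0mem : ∀ x, x ∈ T0 ↔ (∀ n i, ‖Hn n x (v i)‖ ≤ C * ‖v i‖) ∧
      ∀ i, ∃ L, Tendsto (fun k => Hn (nk k) x (v i)) atTop (𝓝 L) := by
    intro x
    simp [hT0, hA, hB, Set.mem_iInter]
  have hT0meas : MeasurableSet T0 := by
    refine MeasurableSet.inter ?_ ?_
    · refine MeasurableSet.iInter fun n => MeasurableSet.iInter fun i => ?_
      exact measurableSet_le ((hmeasn n (v i)).norm.measurable) measurable_const
    · refine MeasurableSet.iInter fun i => ?_
      exact measurableSet_exists_tendsto fun k => (hmeasn (nk k) (v i)).measurable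
  have haeT0 : ∀ᵐ x ∂(volume : Measure (Fin d → AddCircle (1:ℝ))), x ∈ T0 := by
    have h1 : ∀ᵐ x ∂(volume : Measure (Fin d → AddCircle (1:ℝ))),
        ∀ n i, ‖Hn n x (v i)‖ ≤ C * ‖v i‖ := by
      rw [ae_all_iff]
      intro n
      filter_upwards [hbound n] with x hx i
      exact le_trans ((Hn n x).le_opNorm _) (mul_le_mul_of_nonneg_right hx (norm_nonneg _))
    have h2 : ∀ᵐ x ∂(volume : Measure (Fin d → AddCircle (1:ℝ))), ∀ i, ∃ L,
        Tendsto (fun k => Hn (nk k) x (v i)) atTop (𝓝 L) := by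
      rw [ae_all_iff]
      intro i
      filter_upwards [hconv_vi i] with x hx
      exact ⟨_, hx⟩
    filter_upwards [h1, h2] with x hx1 hx2
    exact (hT0mem x).mpr ⟨hx1, hx2⟩
  have hT0c : (volume : Measure (Fin d → AddCircle (1:ℝ))) T0ᶜ = 0 := by
    rw [Set.compl_def]
    exact ae_iff.mp haeT0
  -- the limit operator on the good set
  have hex : ∀ x, x ∈ T0 → ∃ S : E →L[ℂ] E, ‖S‖ ≤ C ∧
      ∀ w, Tendsto (fun k => Hn (nk k) x w) atTop (𝓝 (S w)) := by
    intro x hx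
    obtain ⟨hx1, hx2⟩ := (hT0mem x).mp hx
    exact aux_clm_limit (fun k => Hn (nk k) x) C hC0 hv (fun k i => hx1 (nk k) i) hx2
  set H : (Fin d → AddCircle (1:ℝ)) → E →L[ℂ] E :=
    fun x => if hx : x ∈ T0 then (hex x hx).choose else 0 with hH
  have hHprop : ∀ x (hx : x ∈ T0), ‖H x‖ ≤ C ∧
      ∀ w, Tendsto (fun k => Hn (nk k) x w) atTop (𝓝 (H x w)) := by
    intro x hx
    have : H x = (hex x hx).choose := by rw [hH]; exact dif_pos hx
    rw [this]
    exact (hex x hx).choose_spec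
  have hHzero : ∀ x, x ∉ T0 → H x = 0 := by
    intro x hx
    rw [hH]; exact dif_neg hx
  refine ⟨H, ?_, ?_, ?_, nk, hnk_mono, T0, hT0c, fun x hx w => (hHprop x hx).2 w⟩
  · -- strong measurability
    intro w
    refine stronglyMeasurable_of_tendsto atTop
      (f := fun k => T0.indicator (fun x => Hn (nk k) x w))
      (fun k => (hmeasn (nk k) w).indicator hT0meas) (tendsto_pi_nhds.2 fun x => ?_)
    by_cases hx : x ∈ T0
    · simp only [Set.indicator_of_mem hx]
      exact (hHprop x hx).2 w
    · simp only [Set.indicator_of_notMem hx, hHzero x hx]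
      simp [tendsto_const_nhds]
  · -- a.e. norm bound
    refine Filter.Eventually.of_forall fun x => ?_
    by_cases hx : x ∈ T0
    · exact (hHprop x hx).1
    · rw [hHzero x hx]; simpa using hC0
  · -- identification of `𝓗`
    intro u
    have h1 : Tendsto (fun k => ∫ x, ‖Hn (nk k) x (u x) - (𝓗 u) x‖ ^ 2 ∂volume)
        atTop (𝓝 0) := (hconv u).comp hnk_mono.tendsto_atTop
    have hQ : ∀ j, ∀ᶠ m in atTop,
        ∫ x, ‖Hn (nk m) x (u x) - (𝓗 u) x‖ ^ 2 ∂volume ≤ (1/2 : ℝ) ^ j := fun j =>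
      (h1.eventually_lt_const (show (0:ℝ) < (1/2:ℝ)^j by positivity)).mono fun m hm => hm.le
    obtain ⟨mk, hmk_mono, hmk⟩ := extraction_forall_of_eventually hQ
    have key := aux_ae_tendsto (μ := (volume : Measure (Fin d → AddCircle (1:ℝ))))
      (w := fun j x => Hn (nk (mk j)) x (u x) - (𝓗 u) x)
      (fun j => hdiffm (nk (mk j)) u) (fun j => hIntAux (nk (mk j)) u) hmk
    filter_upwards [key, haeT0] with x hx hxT0
    have hA1 : Tendsto (fun j => Hn (nk (mk j)) x (u x)) atTop (𝓝 ((𝓗 u) x)) :=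
      tendsto_sub_nhds_zero_iff.mp hx
    have hB1 : Tendsto (fun j => Hn (nk (mk j)) x (u x)) atTop (𝓝 (H x (u x))) :=
      ((hHprop x hxT0).2 (u x)).comp hmk_mono.tendsto_atTop
    exact tendsto_nhds_unique hA1 hB1
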